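/- Let A be an N×n real matrix of rank r ≥ 1 with full left singular vector matrix U ∈ ℝ^{N×r}, let E be any N×n real matrix, let Ũ_r ∈ ℝ^{N×r} be a matrix of orthonormal left singular vectors of Ã = A + E for its r largest singular values σ̃_1 ≥ … ≥ σ̃_r, and set D̃_r = diag(σ̃_1,…,σ̃_r). Then there exists an orthogonal matrix O ∈ ℝ^{r×r} such that ‖Ũ_r·D̃_r − U·O·D̃_r‖_{2,∞} ≤ ‖Ũ_r·D̃_r − U·Uᵀ·Ũ_r·D̃_r‖_{2,∞} + ‖U‖_{2,∞}·‖(I_N − UUᵀ)·Ũ_r·Ũ_rᵀ‖·‖E‖. -/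

import Mathlib

open MeasureTheory ProbabilityTheory Matrix

noncomputable section

/-- ℓ²→ℓ² operator (spectral) norm of a real matrix. -/
def opNorm {m n : Type*} [Fintype m] [Fintype n] [DecidableEq n]
    (M : Matrix m n ℝ) : ℝ :=
  ‖LinearMap.toContinuousLinearMap (Matrix.toEuclideanLin M)‖

/-- ℓ²→ℓ² operator (spectral) norm of a complex matrix. -/
def opNormC {m n : Type*} [Fintype m] [Fintype n] [DecidableEq n]
    (M : Matrix m n ℂ) : ℝ :=
  ‖LinearMap.toContinuousLinearMap (Matrix.toEuclideanLin M)‖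

/-- Euclidean norm of a finitely indexed real vector. -/
def vnorm {n : Type*} [Fintype n] (x : n → ℝ) : ℝ :=
  Real.sqrt (∑ i, (x i) ^ 2)

/-- `‖M‖_{2,∞}`: the maximum Euclidean norm of the rows of `M`. -/
def twoInf {m n : Type*} [Fintype m] [Fintype n] (M : Matrix m n ℝ) : ℝ :=
  ⨆ i, vnorm (M i)

/-- The diagonal matrix `diag (σ 1, …, σ m)` built from a 1-indexed sequence `σ`. -/
def sdiag {m : ℕ} (σ : ℕ → ℝ) : Matrix (Fin m) (Fin m) ℝ :=
  Matrix.of fun i j => if i = j then σ ((i : ℕ) + 1) else 0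

/-- Orthogonal projection `W_{k,s} W_{k,s}ᵀ` onto the span of the (1-indexed)
columns `k,…,s` of `W`. -/
def projSlice {N m : ℕ} (W : Matrix (Fin N) (Fin m) ℝ) (k s : ℕ) :
    Matrix (Fin N) (Fin N) ℝ :=
  Matrix.of fun a b =>
    ∑ j : Fin m, if k ≤ (j : ℕ) + 1 ∧ (j : ℕ) + 1 ≤ s then W a j * W b j else 0

/-- `‖·‖_{2,∞}` of the submatrix of `M` given by the (1-indexed) columns `k,…,s`. -/
def sliceTwoInf {N m : ℕ} (M : Matrix (Fin N) (Fin m) ℝ) (k s : ℕ) : ℝ :=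
  ⨆ a, Real.sqrt (∑ j : Fin m,
    if k ≤ (j : ℕ) + 1 ∧ (j : ℕ) + 1 ≤ s then (M a j) ^ 2 else 0)

/-- `η = (11 b²/(b−1)²) √(2 (log 9) r + (K+7) log(N+n))`. -/
def eta (N n r : ℕ) (K b : ℝ) : ℝ :=
  11 * b ^ 2 / (b - 1) ^ 2 *
    Real.sqrt (2 * Real.log 9 * r + (K + 7) * Real.log ((N : ℝ) + n))

/-- `χ(b) = 1 + 1/(4b(b−1))`. -/
def chi (b : ℝ) : ℝ := 1 + 1 / (4 * b * (b - 1))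

/-- `ξ(b) = 1 + 1/(2(b−1)²)`. -/
def xib (b : ℝ) : ℝ := 1 + 1 / (2 * (b - 1) ^ 2)

/-- `γ = (9 b²/(b−1)²) √(r (K+7) log(N+n))`. -/
def gam (N n r : ℕ) (K b : ℝ) : ℝ :=
  9 * b ^ 2 / (b - 1) ^ 2 *
    Real.sqrt ((r : ℝ) * (K + 7) * Real.log ((N : ℝ) + n))

/-- `min {δ_{k-1}, δ_s}` where `δ_j = σ_j − σ_{j+1}` (1-indexed) and `δ_0 = ∞`
(so for `k = 1` the minimum is just `δ_s`). -/
def dmin (σ : ℕ → ℝ) (k s : ℕ) : ℝ :=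
  if k = 1 then σ s - σ (s + 1) else min (σ (k - 1) - σ k) (σ s - σ (s + 1))

/-- The symmetric dilation `ℰ = [[0, E], [Eᵀ, 0]]` of a rectangular matrix `E`. -/
def dil {N n : ℕ} (E : Matrix (Fin N) (Fin n) ℝ) :
    Matrix (Fin N ⊕ Fin n) (Fin N ⊕ Fin n) ℝ :=
  Matrix.fromBlocks 0 E Eᵀ 0

/-- Complex resolvent `G(z) = (z I − ℰ)⁻¹` of the dilation. -/
def resolvC {N n : ℕ} (z : ℂ) (E : Matrix (Fin N) (Fin n) ℝ) :
    Matrix (Fin N ⊕ Fin n) (Fin N ⊕ Fin n) ℂ :=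
  (z • (1 : Matrix (Fin N ⊕ Fin n) (Fin N ⊕ Fin n) ℂ) -
      (dil E).map (Complex.ofReal))⁻¹

/-- `φ₁(z) = z − ∑_{t=N+1}^{N+n} G(z)_{tt}` (complex version). -/
def phi1C {N n : ℕ} (z : ℂ) (E : Matrix (Fin N) (Fin n) ℝ) : ℂ :=
  z - ∑ t : Fin n, resolvC z E (Sum.inr t) (Sum.inr t)

/-- `φ₂(z) = z − ∑_{t=1}^{N} G(z)_{tt}` (complex version). -/
def phi2C {N n : ℕ} (z : ℂ) (E : Matrix (Fin N) (Fin n) ℝ) : ℂ :=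
  z - ∑ t : Fin N, resolvC z E (Sum.inl t) (Sum.inl t)

/-- Real resolvent `G(z) = (z I − ℰ)⁻¹` of the dilation, for real `z`. -/
def resolvR {N n : ℕ} (z : ℝ) (E : Matrix (Fin N) (Fin n) ℝ) :
    Matrix (Fin N ⊕ Fin n) (Fin N ⊕ Fin n) ℝ :=
  (z • (1 : Matrix (Fin N ⊕ Fin n) (Fin N ⊕ Fin n) ℝ) - dil E)⁻¹

/-- `φ₁(z)` for real `z` (equals the complex version at a real point). -/
def phi1R {N n : ℕ} (z : ℝ) (E : Matrix (Fin N) (Fin n) ℝ) : ℝ :=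
  z - ∑ t : Fin n, resolvR z E (Sum.inr t) (Sum.inr t)

/-- `φ₂(z)` for real `z` (equals the complex version at a real point). -/
def phi2R {N n : ℕ} (z : ℝ) (E : Matrix (Fin N) (Fin n) ℝ) : ℝ :=
  z - ∑ t : Fin N, resolvR z E (Sum.inl t) (Sum.inl t)

/-- `Φ(z)`: diagonal matrix whose first `N` diagonal entries are `1/φ₁(z)` and whose
last `n` diagonal entries are `1/φ₂(z)`. -/
def PhiC {N n : ℕ} (z : ℂ) (E : Matrix (Fin N) (Fin n) ℝ) :
    Matrix (Fin N ⊕ Fin n) (Fin N ⊕ Fin n) ℂ :=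
  Matrix.of fun p q =>
    if p = q then Sum.elim (fun _ => (phi1C z E)⁻¹) (fun _ => (phi2C z E)⁻¹) p else 0

/-- The `(N+n) × 2r` matrix `𝒰` of eigenvectors of the dilation of `A = U D Vᵀ`. -/
def calU {N n r : ℕ} (U : Matrix (Fin N) (Fin r) ℝ) (V : Matrix (Fin n) (Fin r) ℝ) :
    Matrix (Fin N ⊕ Fin n) (Fin r ⊕ Fin r) ℝ :=
  Matrix.fromBlocks ((Real.sqrt 2)⁻¹ • U) ((Real.sqrt 2)⁻¹ • U)
    ((Real.sqrt 2)⁻¹ • V) (-((Real.sqrt 2)⁻¹ • V))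

/-- Schatten `p`-norm: `(∑ᵢ sᵢ(M)ᵖ)^{1/p}`, where the singular values `sᵢ(M)` are the
square roots of the eigenvalues of `Mᴴ M`. -/
def schatten (p : ℝ) {m r : ℕ} (M : Matrix (Fin m) (Fin r) ℝ) : ℝ :=
  (∑ i, Real.sqrt ((show (Mᵀ * M).IsHermitian by
    simpa [Matrix.conjTranspose_eq_transpose_of_trivial] using
      Matrix.isHermitian_conjTranspose_mul_self M).eigenvalues i) ^ p) ^ (1 / p)


set_option linter.unusedSectionVars false
open scoped Matrix.Norms.L2Operator RealInnerProductSpace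

namespace Stmt19Aux

variable {k l l' : Type*} [Fintype k] [Fintype l] [Fintype l']
  [DecidableEq k] [DecidableEq l] [DecidableEq l']

lemma norm_transpose (M : Matrix k l ℝ) : ‖Mᵀ‖ = ‖M‖ := by
  have h : Mᴴ = Mᵀ := Matrix.ext fun i j => star_trivial _
  rw [← h, Matrix.l2_opNorm_conjTranspose]

lemma norm_tmul_self (M : Matrix k l ℝ) : ‖Mᵀ * M‖ = ‖M‖ * ‖M‖ := by
  have h : Mᴴ = Mᵀ := Matrix.ext fun i j => star_trivial _
  rw [← h, Matrix.l2_opNorm_conjTranspose_mul_self]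

lemma norm_one' [Nonempty k] : ‖(1 : Matrix k k ℝ)‖ = 1 := by
  have h := norm_tmul_self (1 : Matrix k k ℝ)
  rw [Matrix.transpose_one, mul_one] at h
  rcases eq_or_ne ‖(1 : Matrix k k ℝ)‖ 0 with h0 | h0
  · exfalso
    have : (1 : Matrix k k ℝ) = 0 := norm_eq_zero.mp h0
    obtain ⟨i⟩ := ‹Nonempty k›
    have := congrFun (congrFun this i) i
    simp [Matrix.one_apply] at this
  · have h2 : ‖(1 : Matrix k k ℝ)‖ * ‖(1 : Matrix k k ℝ)‖ = ‖(1 : Matrix k k ℝ)‖ * 1 := by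
      rw [mul_one, ← h]
    exact mul_left_cancel₀ h0 h2

lemma norm_isometry [Nonempty l] (W : Matrix k l ℝ) (hW : Wᵀ * W = 1) : ‖W‖ = 1 := by
  have h := norm_tmul_self W
  rw [hW, norm_one'] at h
  nlinarith [norm_nonneg W]

lemma norm_unitary_mul [Nonempty k] (W : Matrix k k ℝ) (hW : Wᵀ * W = 1)
    (X : Matrix k l ℝ) : ‖W * X‖ = ‖X‖ := by
  refine le_antisymm ?_ ?_
  · calc ‖W * X‖ ≤ ‖W‖ * ‖X‖ := Matrix.l2_opNorm_mul W X
    _ = ‖X‖ := by rw [norm_isometry W hW, one_mul]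
  · have hX : X = Wᵀ * (W * X) := by rw [← Matrix.mul_assoc, hW, Matrix.one_mul]
    calc ‖X‖ = ‖Wᵀ * (W * X)‖ := by rw [← hX]
    _ ≤ ‖Wᵀ‖ * ‖W * X‖ := Matrix.l2_opNorm_mul _ _
    _ = ‖W * X‖ := by rw [norm_transpose, norm_isometry W hW, one_mul]

lemma norm_proj_le_one (P : Matrix k k ℝ) (hs : Pᵀ = P) (h2 : P * P = P) : ‖P‖ ≤ 1 := by
  have h := norm_tmul_self P
  rw [hs, h2] at h
  nlinarith [norm_nonneg P]

lemma euclidean_norm_symm (x : l → ℝ) :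
    ‖(EuclideanSpace.equiv l ℝ).symm x‖ = Real.sqrt (∑ i, (x i) ^ 2) := by
  rw [EuclideanSpace.norm_eq]
  congr 1
  refine Finset.sum_congr rfl fun i _ => ?_
  rw [Real.norm_eq_abs, sq_abs]
  rfl

lemma norm_diag_mul_mono (a b : k → ℝ) (hab : ∀ i, |a i| ≤ |b i|)
    (X : Matrix k l ℝ) : ‖Matrix.diagonal a * X‖ ≤ ‖Matrix.diagonal b * X‖ := by
  rw [Matrix.l2_opNorm_def]
  refine ContinuousLinearMap.opNorm_le_bound _ (norm_nonneg _) fun x => ?_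
  have key : ∀ (c : k → ℝ) (y : EuclideanSpace ℝ l),
      (Matrix.toEuclideanLin (Matrix.diagonal c * X)).toContinuousLinearMap y
        = (EuclideanSpace.equiv k ℝ).symm
            (fun i => c i * ((X *ᵥ (WithLp.equiv 2 (l → ℝ) y)) i)) := by
    intro c y
    have : (Matrix.diagonal c * X) *ᵥ (WithLp.equiv 2 (l → ℝ) y)
        = fun i => c i * ((X *ᵥ (WithLp.equiv 2 (l → ℝ) y)) i) := by
      rw [← Matrix.mulVec_mulVec]
      funext i
      rw [Matrix.mulVec_diagonal]
    rw [LinearMap.coe_toContinuousLinearMap', Matrix.toEuclideanLin_apply]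
    exact congrArg (WithLp.toLp 2) this
  rw [LinearEquiv.trans_apply, key]
  set w := X *ᵥ (WithLp.equiv 2 (l → ℝ) x) with hw
  have h1 : ‖(EuclideanSpace.equiv k ℝ).symm (fun i => a i * w i)‖
      ≤ ‖(EuclideanSpace.equiv k ℝ).symm (fun i => b i * w i)‖ := by
    rw [euclidean_norm_symm, euclidean_norm_symm]
    refine Real.sqrt_le_sqrt (Finset.sum_le_sum fun i _ => ?_)
    have := hab i
    rw [mul_pow, mul_pow, ← sq_abs (a i), ← sq_abs (b i)]
    have h2 : |a i| ^ 2 ≤ |b i| ^ 2 := by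
      exact pow_le_pow_left₀ (abs_nonneg _) this 2
    nlinarith [sq_nonneg (w i)]
  refine h1.trans ?_
  have h3 := ContinuousLinearMap.le_opNorm
    ((Matrix.toEuclideanLin (Matrix.diagonal b * X)).toContinuousLinearMap) x
  rw [key b x] at h3
  exact h3

lemma exists_polar {r k : ℕ} (hr : 0 < r) (H : Matrix (Fin r) (Fin r) ℝ)
    (D : Matrix (Fin r) (Fin k) ℝ) (hPSD : (1 - Hᵀ * H).PosSemidef) :
    ∃ O : Matrix (Fin r) (Fin r) ℝ, Oᵀ * O = 1 ∧
      ‖(H - O) * D‖ ≤ ‖(1 - Hᵀ * H) * D‖ := by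
  haveI : Nonempty (Fin r) := ⟨⟨0, hr⟩⟩
  classical
  set M := Hᵀ * H with hMdef
  have hM : M.IsHermitian := by
    simpa [Matrix.conjTranspose_eq_transpose_of_trivial] using
      Matrix.isHermitian_conjTranspose_mul_self H
  set μ : Fin r → ℝ := hM.eigenvalues with hμdef
  set u : Fin r → EuclideanSpace ℝ (Fin r) := fun i => hM.eigenvectorBasis i with hudef
  have hMu : ∀ i, M *ᵥ (WithLp.equiv 2 (Fin r → ℝ) (u i))
      = μ i • (WithLp.equiv 2 (Fin r → ℝ) (u i)) := fun i => hM.mulVec_eigenvectorBasis i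
  have hMPSD : M.PosSemidef := by
    have h := Matrix.posSemidef_conjTranspose_mul_self H
    have hc : Hᴴ = Hᵀ := Matrix.ext fun i j => star_trivial _
    rwa [hc] at h
  have hμ0 : ∀ i, 0 ≤ μ i := fun i => hMPSD.eigenvalues_nonneg i
  -- inner products as dot products
  have hinner : ∀ x y : EuclideanSpace ℝ (Fin r),
      ⟪x, y⟫ = (WithLp.equiv 2 (Fin r → ℝ) x) ⬝ᵥ (WithLp.equiv 2 (Fin r → ℝ) y) := by
    intro x y
    simp [PiLp.inner_apply, dotProduct, mul_comm]
  have horthu := hM.eigenvectorBasis.orthonormal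
  have hdotu : ∀ i j, (WithLp.equiv 2 (Fin r → ℝ) (u i)) ⬝ᵥ (WithLp.equiv 2 (Fin r → ℝ) (u j))
      = if i = j then 1 else 0 := by
    intro i j
    rw [← hinner]
    exact orthonormal_iff_ite.mp horthu i j
  -- μ i ≤ 1
  have hμ1 : ∀ i, μ i ≤ 1 := by
    intro i
    have h := hPSD.dotProduct_mulVec_nonneg (WithLp.equiv 2 (Fin r → ℝ) (u i))
    have hstar : star (WithLp.equiv 2 (Fin r → ℝ) (u i)) = WithLp.equiv 2 (Fin r → ℝ) (u i) :=
      funext fun j => star_trivial _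
    rw [hstar, Matrix.sub_mulVec, Matrix.one_mulVec, hMu i, dotProduct_sub,
      dotProduct_smul, hdotu i i] at h
    simp at h
    linarith
  -- the vectors c i = H *ᵥ u i
  set c : Fin r → (Fin r → ℝ) := fun i => H *ᵥ (WithLp.equiv 2 (Fin r → ℝ) (u i)) with hcdef
  have hdotc : ∀ i j, (c i) ⬝ᵥ (c j) = μ j * (if i = j then 1 else 0) := by
    intro i j
    have e1 : (c i) ⬝ᵥ (c j)
        = (WithLp.equiv 2 (Fin r → ℝ) (u i)) ⬝ᵥ (M *ᵥ (WithLp.equiv 2 (Fin r → ℝ) (u j))) := by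
      calc (c i) ⬝ᵥ (c j)
          = ((WithLp.equiv 2 (Fin r → ℝ) (u i)) ᵥ* Hᵀ) ⬝ᵥ (c j) := by
            rw [Matrix.vecMul_transpose]
        _ = (WithLp.equiv 2 (Fin r → ℝ) (u i)) ⬝ᵥ (Hᵀ *ᵥ (c j)) :=
            (Matrix.dotProduct_mulVec _ _ _).symm
        _ = (WithLp.equiv 2 (Fin r → ℝ) (u i)) ⬝ᵥ (M *ᵥ (WithLp.equiv 2 (Fin r → ℝ) (u j))) := by
            rw [hcdef, hMdef, ← Matrix.mulVec_mulVec]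
    rw [e1, hMu j, dotProduct_smul, hdotu i j, smul_eq_mul]
  -- orthonormal family on the support of μ
  set s : Set (Fin r) := {i | μ i ≠ 0} with hsdef
  set v : Fin r → EuclideanSpace ℝ (Fin r) :=
    fun i => (Real.sqrt (μ i))⁻¹ • (EuclideanSpace.equiv (Fin r) ℝ).symm (c i) with hvdef
  have hvorth : Orthonormal ℝ (s.domRestrict v) := by
    rw [orthonormal_iff_ite]
    rintro ⟨i, hi⟩ ⟨j, hj⟩
    have hinnerc : ⟪(EuclideanSpace.equiv (Fin r) ℝ).symm (c i),
        (EuclideanSpace.equiv (Fin r) ℝ).symm (c j)⟫ = μ j * (if i = j then 1 else 0) := by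
      rw [hinner, ← hdotc i j]
      rfl
    simp only [Set.domRestrict_apply, hvdef, real_inner_smul_left, real_inner_smul_right, hinnerc]
    by_cases hij : i = j
    · subst hij
      simp only [if_pos rfl, mul_one, Subtype.mk.injEq, if_pos rfl]
      have hμi : 0 < μ i := lt_of_le_of_ne (hμ0 i) (Ne.symm hi)
      have hs : Real.sqrt (μ i) ≠ 0 := ne_of_gt (Real.sqrt_pos.mpr hμi)
      field_simp
      all_goals nlinarith [Real.sq_sqrt (hμ0 i), Real.sqrt_nonneg (μ i)]
    · have : (⟨i, hi⟩ : s) ≠ ⟨j, hj⟩ := by simpa using hij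
      rw [if_neg hij, if_neg this]
      ring
  -- extend to an orthonormal basis
  obtain ⟨b, hb⟩ := hvorth.exists_orthonormalBasis_extension_of_card_eq
    (finrank_euclideanSpace (𝕜 := ℝ) (ι := Fin r))
  -- key: H *ᵥ u i = √(μ i) • b i
  have hkey : ∀ i, c i = fun j => Real.sqrt (μ i) * (WithLp.equiv 2 (Fin r → ℝ) (b i)) j := by
    intro i
    by_cases hi : μ i = 0
    · have hzero : c i = 0 := by
        have := hdotc i i
        rw [hi, zero_mul] at this
        exact dotProduct_self_eq_zero.mp this
      funext j
      rw [hzero, hi]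
      simp
    · have hbi : b i = v i := hb i hi
      have hμi : 0 < μ i := lt_of_le_of_ne (hμ0 i) (Ne.symm hi)
      have hs : Real.sqrt (μ i) ≠ 0 := ne_of_gt (Real.sqrt_pos.mpr hμi)
      funext j
      rw [hbi]
      have : (WithLp.equiv 2 (Fin r → ℝ) (v i)) j = (Real.sqrt (μ i))⁻¹ * c i j := rfl
      rw [this]
      field_simp
  -- matrices of the bases
  set Wu : Matrix (Fin r) (Fin r) ℝ :=
    Matrix.of (fun j i => (WithLp.equiv 2 (Fin r → ℝ) (u i)) j) with hWudef
  set Wb : Matrix (Fin r) (Fin r) ℝ :=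
    Matrix.of (fun j i => (WithLp.equiv 2 (Fin r → ℝ) (b i)) j) with hWbdef
  have hdotb : ∀ i j, (WithLp.equiv 2 (Fin r → ℝ) (b i)) ⬝ᵥ (WithLp.equiv 2 (Fin r → ℝ) (b j))
      = if i = j then 1 else 0 := by
    intro i j
    rw [← hinner]
    exact orthonormal_iff_ite.mp b.orthonormal i j
  have hWu : Wuᵀ * Wu = 1 := by
    ext i j
    simp only [Matrix.mul_apply, Matrix.transpose_apply, hWudef, Matrix.of_apply]
    rw [Matrix.one_apply, ← hdotu i j]
    simp [dotProduct]
  have hWb : Wbᵀ * Wb = 1 := by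
    ext i j
    simp only [Matrix.mul_apply, Matrix.transpose_apply, hWbdef, Matrix.of_apply]
    rw [Matrix.one_apply, ← hdotb i j]
    simp [dotProduct]
  have hWuWut : Wu * Wuᵀ = 1 := mul_eq_one_comm.mp hWu
  -- matrix identities
  have hHW : H * Wu = Wb * Matrix.diagonal (fun i => Real.sqrt (μ i)) := by
    ext j i
    have h1 : (H * Wu) j i = c i j := by
      simp only [Matrix.mul_apply, hWudef, Matrix.of_apply, hcdef, Matrix.mulVec, dotProduct]
    rw [h1, hkey i, Matrix.mul_diagonal, hWbdef]
    simp [mul_comm]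
  have hMW : M * Wu = Wu * Matrix.diagonal μ := by
    ext j i
    have h1 : (M * Wu) j i = (M *ᵥ (WithLp.equiv 2 (Fin r → ℝ) (u i))) j := by
      simp only [Matrix.mul_apply, hWudef, Matrix.of_apply, Matrix.mulVec, dotProduct]
    rw [h1, hMu i, Matrix.mul_diagonal, hWudef]
    simp [mul_comm]
  have hH : H = Wb * Matrix.diagonal (fun i => Real.sqrt (μ i)) * Wuᵀ := by
    rw [← hHW, Matrix.mul_assoc, hWuWut, Matrix.mul_one]
  have hMeq : M = Wu * Matrix.diagonal μ * Wuᵀ := by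
    rw [← hMW, Matrix.mul_assoc, hWuWut, Matrix.mul_one]
  refine ⟨Wb * Wuᵀ, ?_, ?_⟩
  · rw [Matrix.transpose_mul, Matrix.transpose_transpose, Matrix.mul_assoc,
      ← Matrix.mul_assoc Wbᵀ, hWb, Matrix.one_mul]
    exact hWuWut
  · have hHO : (H - Wb * Wuᵀ) * D
        = Wb * (Matrix.diagonal (fun i => Real.sqrt (μ i) - 1) * (Wuᵀ * D)) := by
      have hd : Matrix.diagonal (fun i => Real.sqrt (μ i) - 1)
          = Matrix.diagonal (fun i => Real.sqrt (μ i)) - 1 := by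
        rw [← Matrix.diagonal_one, Matrix.diagonal_sub]
      rw [hd, hH]
      simp only [Matrix.sub_mul, Matrix.mul_sub, Matrix.one_mul, Matrix.mul_one,
        Matrix.mul_assoc]
    rw [hHO, norm_unitary_mul Wb hWb]
    have step2 : ‖Matrix.diagonal (fun i => Real.sqrt (μ i) - 1) * (Wuᵀ * D)‖
        ≤ ‖Matrix.diagonal (fun i => μ i - 1) * (Wuᵀ * D)‖ := by
      refine norm_diag_mul_mono _ _ (fun i => ?_) _
      have h0 := hμ0 i
      have h1 := hμ1 i
      have hsle : Real.sqrt (μ i) ≤ 1 := by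
        rw [show (1:ℝ) = Real.sqrt 1 from (Real.sqrt_one).symm]
        exact Real.sqrt_le_sqrt h1
      have hsge : μ i ≤ Real.sqrt (μ i) := by
        have : Real.sqrt (μ i ^ 2) ≤ Real.sqrt (μ i) := by
          refine Real.sqrt_le_sqrt ?_
          nlinarith
        rwa [Real.sqrt_sq h0] at this
      rw [abs_of_nonpos (by linarith), abs_of_nonpos (by linarith)]
      linarith
    refine step2.trans ?_
    have step3 : ‖Matrix.diagonal (fun i => μ i - 1) * (Wuᵀ * D)‖
        = ‖(1 - M) * D‖ := by
      rw [← norm_unitary_mul Wu hWu]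
      have he : Wu * (Matrix.diagonal (fun i => μ i - 1) * (Wuᵀ * D)) = (M - 1) * D := by
        have hd : Matrix.diagonal (fun i => μ i - 1) = Matrix.diagonal μ - 1 := by
          rw [← Matrix.diagonal_one, Matrix.diagonal_sub]
        have h2 : Wu * (Wuᵀ * D) = D := by
          rw [← Matrix.mul_assoc, hWuWut, Matrix.one_mul]
        rw [hd, hMeq]
        simp only [Matrix.sub_mul, Matrix.mul_sub, Matrix.one_mul, Matrix.mul_one,
          Matrix.mul_assoc, h2]
      rw [he]
      have : (1 - M) * D = -((M - 1) * D) := by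
        rw [← Matrix.neg_mul, neg_sub]
      rw [this, norm_neg]
    rw [step3, hMdef]


-- two-infinity norm lemmas
lemma vnorm_eq (x : l → ℝ) : vnorm x = ‖(EuclideanSpace.equiv l ℝ).symm x‖ := by
  rw [vnorm, euclidean_norm_symm]

lemma vnorm_nonneg (x : l → ℝ) : 0 ≤ vnorm x := Real.sqrt_nonneg _

lemma twoInf_nonneg (M : Matrix k l ℝ) : 0 ≤ twoInf M :=
  Real.iSup_nonneg fun _ => vnorm_nonneg _

lemma vnorm_le_twoInf (M : Matrix k l ℝ) (i : k) : vnorm (M i) ≤ twoInf M :=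
  le_ciSup (f := fun i => vnorm (M i)) (Set.Finite.bddAbove (Set.finite_range _)) i

lemma twoInf_le {M : Matrix k l ℝ} {cst : ℝ} (hc : 0 ≤ cst)
    (h : ∀ i, vnorm (M i) ≤ cst) : twoInf M ≤ cst := Real.iSup_le h hc

lemma twoInf_add_le (M₁ M₂ : Matrix k l ℝ) :
    twoInf (M₁ + M₂) ≤ twoInf M₁ + twoInf M₂ := by
  refine twoInf_le (add_nonneg (twoInf_nonneg _) (twoInf_nonneg _)) fun i => ?_
  have h1 : vnorm ((M₁ + M₂) i) ≤ vnorm (M₁ i) + vnorm (M₂ i) := by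
    rw [vnorm_eq, vnorm_eq, vnorm_eq]
    have he : (EuclideanSpace.equiv l ℝ).symm ((M₁ + M₂) i)
        = (EuclideanSpace.equiv l ℝ).symm (M₁ i) + (EuclideanSpace.equiv l ℝ).symm (M₂ i) := by
      have : (M₁ + M₂) i = M₁ i + M₂ i := rfl
      rw [this, map_add]
    rw [he]
    exact norm_add_le _ _
  exact h1.trans (add_le_add (vnorm_le_twoInf _ _) (vnorm_le_twoInf _ _))

lemma twoInf_mul_le (M : Matrix k l ℝ) (C : Matrix l l' ℝ) :
    twoInf (M * C) ≤ twoInf M * ‖C‖ := by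
  refine twoInf_le (mul_nonneg (twoInf_nonneg _) (norm_nonneg _)) fun i => ?_
  have hrow : (M * C) i = Cᵀ *ᵥ (M i) := by
    funext j
    simp [Matrix.mul_apply, Matrix.mulVec, dotProduct, Matrix.transpose_apply, mul_comm]
  have h1 : vnorm ((M * C) i)
      ≤ ‖Cᵀ‖ * ‖((EuclideanSpace.equiv l ℝ).symm (M i) : EuclideanSpace ℝ l)‖ := by
    rw [vnorm_eq, hrow]
    exact Matrix.l2_opNorm_mulVec Cᵀ ((EuclideanSpace.equiv l ℝ).symm (M i))
  rw [norm_transpose, ← vnorm_eq] at h1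
  calc vnorm ((M * C) i) ≤ ‖C‖ * vnorm (M i) := h1
    _ ≤ ‖C‖ * twoInf M := by
        exact mul_le_mul_of_nonneg_left (vnorm_le_twoInf M i) (norm_nonneg C)
    _ = twoInf M * ‖C‖ := mul_comm _ _

end Stmt19Aux

/-- inequality (10) / Appendix A.4 of the paper: deterministic
decomposition bound for the weighted Procrustes comparison. -/
theorem stmt19_weighted_procrustes_decomposition
    (N n r : ℕ) (hN : 0 < N) (hn : 0 < n) (hr : 0 < r) (hrN : r ≤ N)
    (A E : Matrix (Fin N) (Fin n) ℝ)
    (U : Matrix (Fin N) (Fin r) ℝ) (V : Matrix (Fin n) (Fin r) ℝ) (σ : ℕ → ℝ)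
    (hU : Uᵀ * U = 1) (hV : Vᵀ * V = 1) (hA : A = U * sdiag (m := r) σ * Vᵀ)
    (hσpos : ∀ j, 1 ≤ j → j ≤ r → 0 < σ j)
    (hσdec : ∀ j, 1 ≤ j → σ (j + 1) ≤ σ j)
    (hσzero : ∀ j, r < j → σ j = 0)
    (m : ℕ) (hm : m = min N n) (hrm : r ≤ m)
    (Ut : Matrix (Fin N) (Fin m) ℝ) (Vt : Matrix (Fin n) (Fin m) ℝ) (σt : ℕ → ℝ)
    (hUt : Utᵀ * Ut = 1) (hVt : Vtᵀ * Vt = 1)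
    (hAt : A + E = Ut * sdiag (m := m) σt * Vtᵀ)
    (hσtdec : ∀ j, 1 ≤ j → σt (j + 1) ≤ σt j)
    (hσtnn : ∀ j, 1 ≤ j → 0 ≤ σt j) :
    ∃ O : Matrix (Fin r) (Fin r) ℝ, Oᵀ * O = 1 ∧
      twoInf (Ut.submatrix id (Fin.castLE hrm) * sdiag (m := r) σt - U * O * sdiag (m := r) σt) ≤
        twoInf (Ut.submatrix id (Fin.castLE hrm) * sdiag (m := r) σt -
            U * (Uᵀ * (Ut.submatrix id (Fin.castLE hrm) * sdiag (m := r) σt))) +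
          twoInf U *
            opNorm ((1 - U * Uᵀ) *
              (Ut.submatrix id (Fin.castLE hrm) *
                (Ut.submatrix id (Fin.castLE hrm))ᵀ)) *
            opNorm E := by
  classical
  haveI hNer : Nonempty (Fin r) := ⟨⟨0, hr⟩⟩
  haveI hNeN : Nonempty (Fin N) := ⟨⟨0, hN⟩⟩
  set B : Matrix (Fin N) (Fin r) ℝ := Ut.submatrix id (Fin.castLE hrm) with hBdef
  set Vr : Matrix (Fin n) (Fin r) ℝ := Vt.submatrix id (Fin.castLE hrm) with hVrdef
  set D : Matrix (Fin r) (Fin r) ℝ := sdiag σt with hDdef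
  set P : Matrix (Fin N) (Fin N) ℝ := 1 - U * Uᵀ with hPdef
  set H : Matrix (Fin r) (Fin r) ℝ := Uᵀ * B with hHdef
  have hBtB : Bᵀ * B = 1 := by
    ext i j
    have h := congrFun (congrFun hUt (Fin.castLE hrm i)) (Fin.castLE hrm j)
    simp only [Matrix.mul_apply, Matrix.transpose_apply, Matrix.submatrix_apply, id,
      hBdef] at h ⊢
    rw [h]
    by_cases hij : i = j
    · subst hij; simp [Matrix.one_apply]
    · have hne : Fin.castLE hrm i ≠ Fin.castLE hrm j := by
        intro hc
        apply hij
        have hv := congrArg Fin.val hc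
        simp only [Fin.coe_castLE] at hv
        exact Fin.ext hv
      simp [Matrix.one_apply, hij, hne]
  have hVrtVr : Vrᵀ * Vr = 1 := by
    ext i j
    have h := congrFun (congrFun hVt (Fin.castLE hrm i)) (Fin.castLE hrm j)
    simp only [Matrix.mul_apply, Matrix.transpose_apply, Matrix.submatrix_apply, id,
      hVrdef] at h ⊢
    rw [h]
    by_cases hij : i = j
    · subst hij; simp [Matrix.one_apply]
    · have hne : Fin.castLE hrm i ≠ Fin.castLE hrm j := by
        intro hc
        apply hij
        have hv := congrArg Fin.val hc
        simp only [Fin.coe_castLE] at hv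
        exact Fin.ext hv
      simp [Matrix.one_apply, hij, hne]
  have hPsym : Pᵀ = P := by
    rw [hPdef, Matrix.transpose_sub, Matrix.transpose_one, Matrix.transpose_mul,
      Matrix.transpose_transpose]
  have hXX : (U * Uᵀ) * (U * Uᵀ) = U * Uᵀ := by
    rw [Matrix.mul_assoc, ← Matrix.mul_assoc Uᵀ, hU, Matrix.one_mul]
  have hPP : P * P = P := by
    rw [hPdef]
    simp only [Matrix.sub_mul, Matrix.mul_sub, Matrix.mul_one, Matrix.one_mul, hXX]
    abel
  have hPU : P * U = 0 := by
    rw [hPdef, Matrix.sub_mul, Matrix.one_mul, Matrix.mul_assoc, hU, Matrix.mul_one, sub_self]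
  have hPA : P * A = 0 := by
    rw [hA, ← Matrix.mul_assoc, ← Matrix.mul_assoc, hPU, Matrix.zero_mul, Matrix.zero_mul]
  have hBD : B * D = (A + E) * Vr := by
    have step1 : (A + E) * Vr = ((A + E) * Vt).submatrix id (Fin.castLE hrm) := by
      ext a j
      simp [Matrix.mul_apply, Matrix.submatrix_apply, hVrdef]
    have step2 : (A + E) * Vt = Ut * sdiag (m := m) σt := by
      rw [hAt, Matrix.mul_assoc (Ut * sdiag (m := m) σt), hVt, Matrix.mul_one]
    rw [step1, step2]
    ext a j
    simp [Matrix.mul_apply, sdiag, Matrix.submatrix_apply, Matrix.of_apply, mul_ite, mul_zero,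
      hBdef, hDdef]
  have hPBD : P * (B * D) = P * (E * Vr) := by
    rw [hBD, ← Matrix.mul_assoc, Matrix.mul_add, hPA, zero_add, Matrix.mul_assoc]
  have hHt : Hᵀ = Bᵀ * U := by
    rw [hHdef, Matrix.transpose_mul, Matrix.transpose_transpose]
  have h1M : (1 : Matrix (Fin r) (Fin r) ℝ) - Hᵀ * H = Bᵀ * (P * B) := by
    rw [hPdef, Matrix.sub_mul, Matrix.one_mul, Matrix.mul_sub, hBtB, hHt, hHdef]
    simp only [Matrix.mul_assoc]
  have hPSDM : ((1 : Matrix (Fin r) (Fin r) ℝ) - Hᵀ * H).PosSemidef := by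
    rw [h1M]
    have he : Bᵀ * (P * B) = (P * B)ᵀ * (P * B) := by
      rw [Matrix.transpose_mul, hPsym, Matrix.mul_assoc, ← Matrix.mul_assoc P P B, hPP]
    rw [he]
    have h := Matrix.posSemidef_conjTranspose_mul_self (P * B)
    have hc : (P * B)ᴴ = (P * B)ᵀ := Matrix.ext fun i j => star_trivial _
    rwa [hc] at h
  obtain ⟨O, hOO, hOle⟩ := Stmt19Aux.exists_polar hr H D hPSDM
  refine ⟨O, hOO, ?_⟩
  have hnB : ‖B‖ = 1 := Stmt19Aux.norm_isometry B hBtB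
  have hnVr : ‖Vr‖ = 1 := Stmt19Aux.norm_isometry Vr hVrtVr
  have hnP : ‖P‖ ≤ 1 := Stmt19Aux.norm_proj_le_one P hPsym hPP
  have hEV : ‖P * (E * Vr)‖ ≤ ‖E‖ := by
    calc ‖P * (E * Vr)‖ ≤ ‖P‖ * ‖E * Vr‖ := Matrix.l2_opNorm_mul _ _
      _ ≤ 1 * ‖E * Vr‖ := by
          exact mul_le_mul_of_nonneg_right hnP (norm_nonneg _)
      _ = ‖E * Vr‖ := one_mul _
      _ ≤ ‖E‖ * ‖Vr‖ := Matrix.l2_opNorm_mul _ _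
      _ = ‖E‖ := by rw [hnVr, mul_one]
  have hBtP : ‖Bᵀ * P‖ = ‖P * B‖ := by
    have h := Stmt19Aux.norm_transpose (Bᵀ * P)
    rw [Matrix.transpose_mul, Matrix.transpose_transpose, hPsym] at h
    exact h.symm
  have hPB : ‖P * B‖ ≤ ‖P * (B * Bᵀ)‖ := by
    have he : P * B = (P * (B * Bᵀ)) * B := by
      rw [Matrix.mul_assoc, Matrix.mul_assoc, hBtB, Matrix.mul_one]
    calc ‖P * B‖ = ‖(P * (B * Bᵀ)) * B‖ := by rw [← he]
      _ ≤ ‖P * (B * Bᵀ)‖ * ‖B‖ := Matrix.l2_opNorm_mul _ _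
      _ = ‖P * (B * Bᵀ)‖ := by rw [hnB, mul_one]
  have hPPX : ∀ X : Matrix (Fin N) (Fin r) ℝ, P * (P * X) = P * X := fun X => by
    rw [← Matrix.mul_assoc, hPP]
  have hTD : ‖((1 : Matrix (Fin r) (Fin r) ℝ) - Hᵀ * H) * D‖ ≤ ‖P * (B * Bᵀ)‖ * ‖E‖ := by
    have he : ((1 : Matrix (Fin r) (Fin r) ℝ) - Hᵀ * H) * D = (Bᵀ * P) * (P * (E * Vr)) := by
      rw [h1M, ← hPBD]
      simp only [Matrix.mul_assoc, hPPX]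
    rw [he]
    calc ‖(Bᵀ * P) * (P * (E * Vr))‖ ≤ ‖Bᵀ * P‖ * ‖P * (E * Vr)‖ := Matrix.l2_opNorm_mul _ _
      _ ≤ ‖P * (B * Bᵀ)‖ * ‖E‖ := by
          refine mul_le_mul ?_ hEV (norm_nonneg _) (norm_nonneg _)
          rw [hBtP]
          exact hPB
  have hdec : B * D - U * O * D = (B * D - U * (Uᵀ * (B * D))) + U * ((H - O) * D) := by
    have h1 : U * ((H - O) * D) = U * (Uᵀ * (B * D)) - U * O * D := by
      rw [Matrix.sub_mul, Matrix.mul_sub]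
      congr 1
      · rw [hHdef, Matrix.mul_assoc]
      · rw [Matrix.mul_assoc]
    rw [h1]
    abel
  calc twoInf (B * D - U * O * D)
      = twoInf ((B * D - U * (Uᵀ * (B * D))) + U * ((H - O) * D)) := by rw [hdec]
    _ ≤ twoInf (B * D - U * (Uᵀ * (B * D))) + twoInf (U * ((H - O) * D)) :=
        Stmt19Aux.twoInf_add_le _ _
    _ ≤ twoInf (B * D - U * (Uᵀ * (B * D))) + twoInf U * ‖(H - O) * D‖ :=
        add_le_add_right (Stmt19Aux.twoInf_mul_le U _) _
    _ ≤ twoInf (B * D - U * (Uᵀ * (B * D))) + twoInf U * (‖P * (B * Bᵀ)‖ * ‖E‖) :=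
        add_le_add_right
          (mul_le_mul_of_nonneg_left (hOle.trans hTD) (Stmt19Aux.twoInf_nonneg U)) _
    _ = twoInf (B * D - U * (Uᵀ * (B * D))) + twoInf U * ‖P * (B * Bᵀ)‖ * ‖E‖ := by
        rw [mul_assoc]
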